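/- Let k be a positive integer with k ≡ 3 (mod 4) and suppose the integer w_1 satisfies k^k = w_1² + ((k+1)/2)^{k+1}. Then w_1 and (k+1)/2 are coprime: gcd(w_1, (k+1)/2) = 1. -/

import Mathlib

/-- If `k ≡ 3 (mod 4)` is a positive integer and `k^k = w₁² + ((k+1)/2)^{k+1}`,
then `w₁` and `(k+1)/2` are coprime. -/
theorem coprime_of_sum_of_squares_decomposition (k : ℕ) (hk : 0 < k) (hk4 : k % 4 = 3)
    (w₁ : ℤ) (hw : (k : ℤ) ^ k = w₁ ^ 2 + (((k + 1) / 2 : ℕ) : ℤ) ^ (k + 1)) :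
    Int.gcd w₁ (((k + 1) / 2 : ℕ) : ℤ) = 1 := by
  set m : ℕ := (k + 1) / 2 with hmdef
  have hm : 2 * m = k + 1 := by omega
  by_contra h
  obtain ⟨p, hp, hpd⟩ := Nat.exists_prime_and_dvd h
  have hpz : (p : ℤ) ∣ (Int.gcd w₁ (m : ℤ) : ℤ) := Int.natCast_dvd_natCast.mpr hpd
  have h1 : (p : ℤ) ∣ w₁ := hpz.trans (Int.gcd_dvd_left w₁ (m : ℤ))
  have h2 : (p : ℤ) ∣ (m : ℤ) := hpz.trans (Int.gcd_dvd_right w₁ (m : ℤ))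
  have h3 : (p : ℤ) ∣ (k : ℤ) ^ k := by
    rw [hw]
    exact dvd_add (dvd_pow h1 two_ne_zero) (dvd_pow h2 (Nat.succ_ne_zero k))
  have h4 : (p : ℤ) ∣ (k : ℤ) := (Int.Prime.dvd_pow' (by exact_mod_cast hp) h3)
  have h5 : (p : ℤ) ∣ 2 * (m : ℤ) - (k : ℤ) := dvd_sub (Dvd.dvd.mul_left h2 2) h4
  have h6 : 2 * (m : ℤ) - (k : ℤ) = 1 := by
    have : (2 * m : ℤ) = (k : ℤ) + 1 := by exact_mod_cast congrArg Nat.cast hm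
    omega
  rw [h6] at h5
  have := Int.eq_one_of_dvd_one (by positivity) h5
  simp at this
  exact hp.one_lt.ne' (by exact_mod_cast this)
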